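/- arXiv:1405.7579 — 5 statements merged into one kernel-verified Lean document; each statement's English description precedes it below -/
import Mathlib

section
/- For a point P = (x_p, y_p) and a line l = {(x,y) : a*x + b*y + c = 0} with (a,b) ≠ (0,0), the infimum of the taxicab distance |x_p - x| + |y_p - y| over points (x,y) on l equals |a*x_p + b*y_p + c| / max(|a|, |b|). -/
/-- Taxicab distance from a point to a line (Lemma 1). -/
theorem taxicab_dist_point_line (a b c xp yp : ℝ) (hab : (a, b) ≠ (0, 0)) :
    sInf {d : ℝ | ∃ x y : ℝ, a * x + b * y + c = 0 ∧ d = |xp - x| + |yp - y|} =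
      |a * xp + b * yp + c| / max |a| |b| := by
  set S := {d : ℝ | ∃ x y : ℝ, a * x + b * y + c = 0 ∧ d = |xp - x| + |yp - y|} with hS
  have hab' : a ≠ 0 ∨ b ≠ 0 := by
    by_contra h
    push_neg at h
    exact hab (by simp [h.1, h.2])
  have hM : 0 < max |a| |b| := by
    rcases hab' with h | h
    · exact lt_max_of_lt_left (abs_pos.mpr h)
    · exact lt_max_of_lt_right (abs_pos.mpr h)
  -- lower bound
  have hlb : ∀ d ∈ S, |a * xp + b * yp + c| / max |a| |b| ≤ d := by
    rintro d ⟨x, y, hxy, rfl⟩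
    rw [div_le_iff₀ hM]
    have key : a * xp + b * yp + c = a * (xp - x) + b * (yp - y) := by
      linear_combination hxy
    calc |a * xp + b * yp + c| = |a * (xp - x) + b * (yp - y)| := by rw [key]
      _ ≤ |a * (xp - x)| + |b * (yp - y)| := abs_add_le _ _
      _ = |a| * |xp - x| + |b| * |yp - y| := by rw [abs_mul, abs_mul]
      _ ≤ max |a| |b| * |xp - x| + max |a| |b| * |yp - y| := by
          gcongr
          · exact le_max_left _ _
          · exact le_max_right _ _
      _ = (|xp - x| + |yp - y|) * max |a| |b| := by ring
  have hbdd : BddBelow S := ⟨|a * xp + b * yp + c| / max |a| |b|, hlb⟩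
  -- upper bound: the infimum is attained
  have hub : |a * xp + b * yp + c| / max |a| |b| ∈ S := by
    rcases le_total |b| |a| with h | h
    · have ha : a ≠ 0 := by
        intro h0
        simp [h0] at h
        exact (hab'.resolve_left (not_not.mpr h0)) h
      refine ⟨xp - (a * xp + b * yp + c) / a, yp, by field_simp; ring, ?_⟩
      rw [max_eq_left h]
      simp [abs_div, sub_sub_cancel]
    · have hb : b ≠ 0 := by
        intro h0
        simp [h0] at h
        exact (hab'.resolve_right (not_not.mpr h0)) h
      refine ⟨xp, yp - (a * xp + b * yp + c) / b, by field_simp; ring, ?_⟩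
      rw [max_eq_right h]
      simp [abs_div, sub_sub_cancel]
  exact le_antisymm (csInf_le hbdd hub) (le_csInf ⟨_, hub⟩ hlb)
end

section
/- Let F₁ = (x₁, y₁) and F₂ = (x₂, y₂) with x₁ = x₂, and let γ ≤ 0 with -γ > δ where δ = |y₁ - y₂| is the taxicab distance between the foci. Then the taxicab ellipse {(x,y) : |x-x₁| + |y-y₁| + |x-x₂| + |y-y₂| = -γ} is a hexagon: concretely, setting 2α = -γ - δ, it is the boundary of the convex hull of the six points (x₁ ± α, y) for y ∈ {y₁, y₂} and (x₁, min(y₁,y₂) - α), (x₁, max(y₁,y₂) + α). -/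
open Set

private lemma taxi_comb_mem {c : Set (ℝ × ℝ)} (hc : Convex ℝ c) {p q r : ℝ × ℝ}
    (hp : p ∈ c) (hq : q ∈ c) (t : ℝ) (h0 : 0 ≤ t) (h1 : t ≤ 1)
    (h : r = (1 - t) • p + t • q) : r ∈ c := by
  rw [h]; exact hc hp hq (by linarith) h0 (by ring)

private lemma taxi_hull_mem (x₁ a b α u v : ℝ) (hab : a ≤ b) (hα : 0 < α)
    (h : 2*|u-x₁| + |v-a| + |v-b| ≤ 2*α + (b-a)) :
    (u, v) ∈ convexHull ℝ ({(x₁+α,a),(x₁-α,a),(x₁+α,b),(x₁-α,b),(x₁,a-α),(x₁,b+α)} : Set (ℝ×ℝ)) := by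
  set S : Set (ℝ×ℝ) := {(x₁+α,a),(x₁-α,a),(x₁+α,b),(x₁-α,b),(x₁,a-α),(x₁,b+α)} with hS
  have hc : Convex ℝ (convexHull ℝ S) := convex_convexHull ℝ S
  have hA : ((x₁+α,a) : ℝ×ℝ) ∈ convexHull ℝ S := subset_convexHull ℝ S (by simp [hS])
  have hB : ((x₁-α,a) : ℝ×ℝ) ∈ convexHull ℝ S := subset_convexHull ℝ S (by simp [hS])
  have hC : ((x₁+α,b) : ℝ×ℝ) ∈ convexHull ℝ S := subset_convexHull ℝ S (by simp [hS])
  have hD : ((x₁-α,b) : ℝ×ℝ) ∈ convexHull ℝ S := subset_convexHull ℝ S (by simp [hS])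
  have hT1 : ((x₁,a-α) : ℝ×ℝ) ∈ convexHull ℝ S := subset_convexHull ℝ S (by simp [hS])
  have hT2 : ((x₁,b+α) : ℝ×ℝ) ∈ convexHull ℝ S := subset_convexHull ℝ S (by simp [hS])
  have hMa : ∀ m, |m - x₁| ≤ α → ((m, a) : ℝ×ℝ) ∈ convexHull ℝ S := by
    intro m hm
    obtain ⟨hm1, hm2⟩ := abs_le.mp hm
    refine taxi_comb_mem hc hB hA ((m - (x₁ - α))/(2*α))
      (div_nonneg (by linarith) (by linarith)) ?_ ?_
    · rw [div_le_one (by linarith)]; linarith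
    · simp only [Prod.smul_mk, Prod.mk_add_mk, Prod.mk.injEq, smul_eq_mul]
      constructor
      · field_simp
        ring
      · ring
  have hMb : ∀ m, |m - x₁| ≤ α → ((m, b) : ℝ×ℝ) ∈ convexHull ℝ S := by
    intro m hm
    obtain ⟨hm1, hm2⟩ := abs_le.mp hm
    refine taxi_comb_mem hc hD hC ((m - (x₁ - α))/(2*α))
      (div_nonneg (by linarith) (by linarith)) ?_ ?_
    · rw [div_le_one (by linarith)]; linarith
    · simp only [Prod.smul_mk, Prod.mk_add_mk, Prod.mk.injEq, smul_eq_mul]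
      constructor
      · field_simp
        ring
      · ring
  have habs := abs_nonneg (u - x₁)
  rcases lt_or_ge v a with hva | hva
  · have h1 : |v - a| = a - v := by rw [abs_sub_comm]; exact abs_of_nonneg (by linarith)
    have h2 : |v - b| = b - v := by rw [abs_sub_comm]; exact abs_of_nonneg (by linarith)
    have key : |u - x₁| + (a - v) ≤ α := by linarith
    set t := (a - v)/α with ht
    have htα : t * α = a - v := by rw [ht, div_mul_cancel₀ _ hα.ne']
    have ht0 : 0 ≤ t := div_nonneg (by linarith) hα.le
    have ht1 : t ≤ 1 := by rw [ht, div_le_one hα]; linarith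
    rcases eq_or_lt_of_le ht1 with heq | hlt
    · have hav : a - v = α := by nlinarith [htα]
      have hu : u = x₁ := by
        have : |u - x₁| ≤ 0 := by linarith
        have := abs_nonneg (u - x₁)
        have h0 : |u - x₁| = 0 := le_antisymm ‹|u - x₁| ≤ 0› this
        have := abs_eq_zero.mp h0; linarith
      have hv : v = a - α := by linarith
      rw [hu, hv]; exact hT1
    · set m := (u - t*x₁)/(1-t) with hm
      have h1t : (0:ℝ) < 1 - t := by linarith
      have hmx : m - x₁ = (u - x₁)/(1-t) := by
        rw [hm]; field_simp; ring
      have hmb : |m - x₁| ≤ α := by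
        rw [hmx, abs_div, abs_of_pos h1t, div_le_iff₀ h1t]
        nlinarith [key, htα]
      refine taxi_comb_mem hc (hMa m hmb) hT1 t ht0 ht1 ?_
      simp only [Prod.smul_mk, Prod.mk_add_mk, Prod.mk.injEq, smul_eq_mul]
      constructor
      · rw [hm]; field_simp; ring
      · nlinarith [htα]
  · rcases le_or_gt v b with hvb | hvb
    · have h1 : |v - a| = v - a := abs_of_nonneg (by linarith)
      have h2 : |v - b| = b - v := by rw [abs_sub_comm]; exact abs_of_nonneg (by linarith)
      have key : |u - x₁| ≤ α := by linarith
      rcases eq_or_lt_of_le hab with hba | hba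
      · have : v = a := le_antisymm (hba ▸ hvb) hva
        rw [this]; exact hMa u key
      · refine taxi_comb_mem hc (hMa u key) (hMb u key) ((v-a)/(b-a))
          (div_nonneg (by linarith) (by linarith)) ?_ ?_
        · rw [div_le_one (by linarith)]; linarith
        · simp only [Prod.smul_mk, Prod.mk_add_mk, Prod.mk.injEq, smul_eq_mul]
          constructor
          · ring
          · have hba' : b - a ≠ 0 := ne_of_gt (by linarith)
            field_simp
            ring
    · have h1 : |v - a| = v - a := abs_of_nonneg (by linarith)
      have h2 : |v - b| = v - b := abs_of_nonneg (by linarith)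
      have key : |u - x₁| + (v - b) ≤ α := by linarith
      set t := (v - b)/α with ht
      have htα : t * α = v - b := by rw [ht, div_mul_cancel₀ _ hα.ne']
      have ht0 : 0 ≤ t := div_nonneg (by linarith) hα.le
      have ht1 : t ≤ 1 := by rw [ht, div_le_one hα]; linarith
      rcases eq_or_lt_of_le ht1 with heq | hlt
      · have hav : v - b = α := by nlinarith [htα]
        have hu : u = x₁ := by
          have h0 : |u - x₁| = 0 := le_antisymm (by linarith) (abs_nonneg _)
          have := abs_eq_zero.mp h0; linarith
        have hv : v = b + α := by linarith
        rw [hu, hv]; exact hT2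
      · set m := (u - t*x₁)/(1-t) with hm
        have h1t : (0:ℝ) < 1 - t := by linarith
        have hmx : m - x₁ = (u - x₁)/(1-t) := by
          rw [hm]; field_simp; ring
        have hmb : |m - x₁| ≤ α := by
          rw [hmx, abs_div, abs_of_pos h1t, div_le_iff₀ h1t]
          nlinarith [key, htα]
        refine taxi_comb_mem hc (hMb m hmb) hT2 t ht0 ht1 ?_
        simp only [Prod.smul_mk, Prod.mk_add_mk, Prod.mk.injEq, smul_eq_mul]
        constructor
        · rw [hm]; field_simp; ring
        · nlinarith [htα]

private lemma taxi_convex (x₁ y₁ y₂ c : ℝ) :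
    Convex ℝ {p : ℝ×ℝ | |p.1-x₁| + |p.2-y₁| + |p.1-x₁| + |p.2-y₂| ≤ c} := by
  intro p hp q hq s t hs ht hst
  simp only [mem_setOf_eq] at hp hq ⊢
  have e0 : (s • p + t • q).1 = s * p.1 + t * q.1 := by
    simp [Prod.fst_add, Prod.smul_fst, smul_eq_mul]
  have e0' : (s • p + t • q).2 = s * p.2 + t * q.2 := by
    simp [Prod.snd_add, Prod.smul_snd, smul_eq_mul]
  have key : ∀ z w v : ℝ, |s * z + t * w - v| ≤ s * |z - v| + t * |w - v| := by
    intro z w v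
    have : s * z + t * w - v = s * (z - v) + t * (w - v) := by
      linear_combination v * hst
    rw [this]
    calc |s * (z - v) + t * (w - v)| ≤ |s * (z - v)| + |t * (w - v)| := abs_add_le _ _
      _ = s * |z - v| + t * |w - v| := by
          rw [abs_mul, abs_mul, abs_of_nonneg hs, abs_of_nonneg ht]
  have k1 := key p.1 q.1 x₁
  have k2 := key p.2 q.2 y₁
  have k3 := key p.2 q.2 y₂
  rw [e0, e0']
  have hc' : s * c + t * c = c := by linear_combination c * hst
  linarith [k1, k2, k3, mul_le_mul_of_nonneg_left hp hs, mul_le_mul_of_nonneg_left hq ht]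

private lemma taxi_frontier (x₁ y₁ y₂ c : ℝ) :
    frontier {p : ℝ×ℝ | |p.1-x₁| + |p.2-y₁| + |p.1-x₁| + |p.2-y₂| ≤ c} =
      {p : ℝ×ℝ | |p.1-x₁| + |p.2-y₁| + |p.1-x₁| + |p.2-y₂| = c} := by
  set g : ℝ×ℝ → ℝ := fun p => |p.1-x₁| + |p.2-y₁| + |p.1-x₁| + |p.2-y₂| with hg
  have hcont : Continuous g := by
    apply Continuous.add
    apply Continuous.add
    apply Continuous.add
    · exact (continuous_fst.sub continuous_const).abs
    · exact (continuous_snd.sub continuous_const).abs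
    · exact (continuous_fst.sub continuous_const).abs
    · exact (continuous_snd.sub continuous_const).abs
  have hclosed : IsClosed {p : ℝ×ℝ | g p ≤ c} := isClosed_le hcont continuous_const
  have hint : interior {p : ℝ×ℝ | g p ≤ c} = {p | g p < c} := by
    apply Subset.antisymm
    · intro p hp
      have hnb : {q : ℝ×ℝ | g q ≤ c} ∈ nhds p := mem_interior_iff_mem_nhds.mp hp
      obtain ⟨ε, hε, hball⟩ := Metric.mem_nhds_iff.mp hnb
      set d : ℝ := if x₁ ≤ p.1 then ε/2 else -(ε/2) with hd
      have hq : ((p.1 + d, p.2) : ℝ×ℝ) ∈ Metric.ball p ε := by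
        simp only [Metric.mem_ball, Prod.dist_eq, Real.dist_eq]
        have h1 : |p.1 + d - p.1| = ε/2 := by
          rw [hd]; split_ifs <;> simp [abs_of_pos, abs_of_neg, hε, half_pos hε]
        have h2 : |p.2 - p.2| = 0 := by simp
        rw [h1, h2]
        simp [max_lt_iff]
        linarith
      have hgq : g (p.1 + d, p.2) ≤ c := hball hq
      have hkey : |p.1 + d - x₁| = |p.1 - x₁| + ε/2 := by
        rw [hd]; split_ifs with hx
        · rw [abs_of_nonneg (by linarith), abs_of_nonneg (by linarith)]; ring
        · rw [abs_of_nonpos (by linarith), abs_of_nonpos (by linarith)]; ring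
      simp only [hg, mem_setOf_eq] at hgq ⊢
      simp only [hkey] at hgq
      linarith
    · exact interior_maximal (fun p (hp : g p < c) => le_of_lt hp)
        (isOpen_lt hcont continuous_const)
  rw [frontier, hclosed.closure_eq, hint]
  ext p
  simp only [mem_diff, mem_setOf_eq, hg]
  constructor
  · rintro ⟨h1, h2⟩; linarith
  · intro h; exact ⟨le_of_eq h, by linarith⟩

/-- Taxi ellipse with vertically aligned foci and -γ > δ is a hexagon (E.1). -/
theorem taxicab_ellipse_hexagon (x₁ y₁ x₂ y₂ γ : ℝ) (hx : x₁ = x₂) (hγ : γ ≤ 0)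
    (hδ : -γ > |y₁ - y₂|) :
    let α : ℝ := (-γ - |y₁ - y₂|) / 2
    {p : ℝ × ℝ | |p.1 - x₁| + |p.2 - y₁| + |p.1 - x₂| + |p.2 - y₂| = -γ} =
      frontier (convexHull ℝ
        {(x₁ + α, y₁), (x₁ - α, y₁), (x₁ + α, y₂), (x₁ - α, y₂),
         (x₁, min y₁ y₂ - α), (x₁, max y₁ y₂ + α)}) := by
  intro α
  have hαdef : α = (-γ - |y₁ - y₂|) / 2 := rfl
  subst hx
  have hα : 0 < α := by rw [hαdef]; linarith
  have hd : -γ = 2*α + |y₁ - y₂| := by rw [hαdef]; ring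
  set S : Set (ℝ×ℝ) := {(x₁ + α, y₁), (x₁ - α, y₁), (x₁ + α, y₂), (x₁ - α, y₂),
      (x₁, min y₁ y₂ - α), (x₁, max y₁ y₂ + α)} with hSdef
  have e1 : |x₁ + α - x₁| = α := by
    rw [show x₁ + α - x₁ = α from by ring]; exact abs_of_pos hα
  have e2 : |x₁ - α - x₁| = α := by
    rw [show x₁ - α - x₁ = -α from by ring, abs_neg]; exact abs_of_pos hα
  have e3 : |y₂ - y₁| = |y₁ - y₂| := abs_sub_comm _ _
  have hSK : S ⊆ {p : ℝ×ℝ | |p.1-x₁| + |p.2-y₁| + |p.1-x₁| + |p.2-y₂| ≤ -γ} := by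
    intro p hp
    simp only [hSdef, mem_insert_iff, mem_singleton_iff] at hp
    rcases hp with h|h|h|h|h|h <;> subst h <;> simp only [mem_setOf_eq] <;> rw [hd]
    · rw [e1, sub_self, abs_zero]; linarith
    · rw [e2, sub_self, abs_zero]; linarith
    · rw [e1, sub_self, abs_zero, e3]; linarith
    · rw [e2, sub_self, abs_zero, e3]; linarith
    · rw [sub_self, abs_zero]
      rcases le_total y₁ y₂ with hy|hy
      · rw [min_eq_left hy,
          show y₁ - α - y₁ = -α from by ring, abs_neg, abs_of_pos hα,
          abs_of_nonpos (by linarith : y₁ - α - y₂ ≤ 0),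
          abs_of_nonpos (by linarith : y₁ - y₂ ≤ 0)]
        linarith
      · rw [min_eq_right hy,
          show y₂ - α - y₂ = -α from by ring, abs_neg, abs_of_pos hα,
          abs_of_nonpos (by linarith : y₂ - α - y₁ ≤ 0),
          abs_of_nonneg (by linarith : (0:ℝ) ≤ y₁ - y₂)]
        linarith
    · rw [sub_self, abs_zero]
      rcases le_total y₁ y₂ with hy|hy
      · rw [max_eq_right hy,
          show y₂ + α - y₂ = α from by ring, abs_of_pos hα,
          abs_of_nonneg (by linarith : (0:ℝ) ≤ y₂ + α - y₁),
          abs_of_nonpos (by linarith : y₁ - y₂ ≤ 0)]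
        linarith
      · rw [max_eq_left hy,
          show y₁ + α - y₁ = α from by ring, abs_of_pos hα,
          abs_of_nonneg (by linarith : (0:ℝ) ≤ y₁ + α - y₂),
          abs_of_nonneg (by linarith : (0:ℝ) ≤ y₁ - y₂)]
        linarith
  have hKsub : {p : ℝ×ℝ | |p.1-x₁| + |p.2-y₁| + |p.1-x₁| + |p.2-y₂| ≤ -γ} ⊆ convexHull ℝ S := by
    intro p hp
    simp only [mem_setOf_eq] at hp
    rw [hd] at hp
    rcases le_total y₁ y₂ with hy|hy
    · have habs : |y₁ - y₂| = y₂ - y₁ := by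
        rw [abs_sub_comm]; exact abs_of_nonneg (by linarith)
      have hmem := taxi_hull_mem x₁ y₁ y₂ α p.1 p.2 hy hα (by rw [habs] at hp; linarith)
      rw [hSdef, min_eq_left hy, max_eq_right hy]
      simpa using hmem
    · have habs : |y₁ - y₂| = y₁ - y₂ := abs_of_nonneg (by linarith)
      have hmem := taxi_hull_mem x₁ y₂ y₁ α p.1 p.2 hy hα (by rw [habs] at hp; linarith)
      have hsets : ({(x₁+α,y₂),(x₁-α,y₂),(x₁+α,y₁),(x₁-α,y₁),(x₁,y₂-α),(x₁,y₁+α)} : Set (ℝ×ℝ)) =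
          {(x₁+α,y₁),(x₁-α,y₁),(x₁+α,y₂),(x₁-α,y₂),(x₁,y₂-α),(x₁,y₁+α)} := by
        ext q; simp only [mem_insert_iff, mem_singleton_iff]; tauto
      rw [hSdef, min_eq_right hy, max_eq_left hy, ← hsets]
      simpa using hmem
  have hKhull : convexHull ℝ S = {p : ℝ×ℝ | |p.1-x₁| + |p.2-y₁| + |p.1-x₁| + |p.2-y₂| ≤ -γ} :=
    Subset.antisymm (convexHull_min hSK (taxi_convex x₁ y₁ y₂ (-γ))) hKsub
  rw [hKhull, taxi_frontier]
end

section
/- Let F₁ = (x₁,y₁), F₂ = (x₂,y₂) with x₁ ≠ x₂ and y₁ ≠ y₂, and let γ ≤ 0 with -γ > δ = |x₁-x₂| + |y₁-y₂|. Setting 2α = -γ - δ, the closed region {(x,y) : |x-x₁|+|y-y₁|+|x-x₂|+|y-y₂| ≤ -γ} has Lebesgue measure (|x₁-x₂| + 2α)·(|y₁-y₂| + 2α) minus 2α², i.e. the taxicab ellipse region (an octagon) has area (|x₁-x₂|+2α)(|y₁-y₂|+2α) - 2α². -/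
open MeasureTheory Set

private lemma slab_eq (u v c : ℝ) (huv : u ≤ v) (hc : v - u ≤ c) :
    {y : ℝ | |y - u| + |y - v| ≤ c} = Set.Icc (u - (c - (v - u)) / 2) (v + (c - (v - u)) / 2) := by
  ext y
  simp only [Set.mem_setOf_eq, Set.mem_Icc]
  constructor
  · intro h
    rcases abs_cases (y - u) with ⟨h1, h1'⟩ | ⟨h1, h1'⟩ <;>
      rcases abs_cases (y - v) with ⟨h2, h2'⟩ | ⟨h2, h2'⟩ <;>
      exact ⟨by linarith, by linarith⟩
  · rintro ⟨h1, h2⟩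
    rcases abs_cases (y - u) with ⟨h3, h3'⟩ | ⟨h3, h3'⟩ <;>
      rcases abs_cases (y - v) with ⟨h4, h4'⟩ | ⟨h4, h4'⟩ <;> linarith

private lemma abs_pair_minmax (x a b : ℝ) :
    |x - a| + |x - b| = |x - min a b| + |x - max a b| := by
  rcases le_total a b with h | h
  · rw [min_eq_left h, max_eq_right h]
  · rw [min_eq_right h, max_eq_left h, add_comm]

private lemma abs_pair_lower (x a b : ℝ) : |a - b| ≤ |x - a| + |x - b| := by
  rcases abs_cases (x - a) with ⟨h1, h1'⟩ | ⟨h1, h1'⟩ <;>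
    rcases abs_cases (x - b) with ⟨h2, h2'⟩ | ⟨h2, h2'⟩ <;>
    rcases abs_cases (a - b) with ⟨h3, h3'⟩ | ⟨h3, h3'⟩ <;> linarith

private lemma integral_linear (c k d e : ℝ) :
    ∫ x in d..e, (c + k * x) = c * (e - d) + k * (e ^ 2 - d ^ 2) / 2 := by
  rw [intervalIntegral.integral_add intervalIntegrable_const
      ((intervalIntegral.intervalIntegrable_id).const_mul k),
    intervalIntegral.integral_const, intervalIntegral.integral_const_mul, integral_id,
    smul_eq_mul]
  ring

/-- Area of the octagonal taxicab ellipse region (E.2). -/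
theorem taxicab_ellipse_octagon_area (x₁ y₁ x₂ y₂ γ : ℝ)
    (hx : x₁ ≠ x₂) (hy : y₁ ≠ y₂) (hγ : γ ≤ 0)
    (hδ : -γ > |x₁ - x₂| + |y₁ - y₂|) :
    let α : ℝ := (-γ - (|x₁ - x₂| + |y₁ - y₂|)) / 2
    volume {p : ℝ × ℝ | |p.1 - x₁| + |p.2 - y₁| + |p.1 - x₂| + |p.2 - y₂| ≤ -γ} =
      ENNReal.ofReal ((|x₁ - x₂| + 2 * α) * (|y₁ - y₂| + 2 * α) - 2 * α ^ 2) := by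
  intro α
  have hα : α = (-γ - (|x₁ - x₂| + |y₁ - y₂|)) / 2 := rfl
  set P := min x₁ x₂ with hP
  set Q := max x₁ x₂ with hQ
  set u := min y₁ y₂ with hu
  set v := max y₁ y₂ with hv
  have ha : Q - P = |x₁ - x₂| := max_sub_min_eq_abs' x₁ x₂
  have hb : v - u = |y₁ - y₂| := max_sub_min_eq_abs' y₁ y₂
  have hPQ : P ≤ Q := min_le_max
  have huv : u ≤ v := min_le_max
  have ha0 : (0:ℝ) ≤ |x₁ - x₂| := abs_nonneg _
  have hb0 : (0:ℝ) ≤ |y₁ - y₂| := abs_nonneg _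
  have hα0 : 0 < α := by rw [hα]; linarith
  have hγ2 : -γ = (Q - P) + (v - u) + 2 * α := by rw [hα, ha, hb]; ring
  -- the x-interval description
  have hxset : {x : ℝ | |x - x₁| + |x - x₂| ≤ (Q - P) + 2 * α} = Set.Icc (P - α) (Q + α) := by
    have h1 : {x : ℝ | |x - P| + |x - Q| ≤ (Q - P) + 2 * α} = Set.Icc (P - α) (Q + α) := by
      rw [slab_eq P Q _ hPQ (by linarith)]
      congr 1 <;> ring
    rw [← h1]
    ext x
    simp only [Set.mem_setOf_eq, abs_pair_minmax x x₁ x₂]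
    exact Iff.rfl
  -- measurability
  set S := {p : ℝ × ℝ | |p.1 - x₁| + |p.2 - y₁| + |p.1 - x₂| + |p.2 - y₂| ≤ -γ} with hSdef
  have hScont : Continuous fun p : ℝ × ℝ => |p.1 - x₁| + |p.2 - y₁| + |p.1 - x₂| + |p.2 - y₂| :=
    by fun_prop
  have hSmeas : MeasurableSet S := by
    have : S = (fun p : ℝ × ℝ => |p.1 - x₁| + |p.2 - y₁| + |p.1 - x₂| + |p.2 - y₂|) ⁻¹'
        Set.Iic (-γ) := rfl
    rw [this]
    exact hScont.measurable measurableSet_Iic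
  rw [MeasureTheory.Measure.volume_eq_prod, Measure.prod_apply hSmeas]
  -- slice computation
  have hslice : ∀ x : ℝ, volume (Prod.mk x ⁻¹' S) =
      Set.indicator (Set.Icc (P - α) (Q + α))
        (fun x => ENNReal.ofReal (-γ - (|x - x₁| + |x - x₂|))) x := by
    intro x
    have hpre : Prod.mk x ⁻¹' S =
        {y : ℝ | |y - u| + |y - v| ≤ -γ - (|x - x₁| + |x - x₂|)} := by
      ext y
      simp only [Set.mem_preimage, hSdef, Set.mem_setOf_eq, hu, hv, ← abs_pair_minmax y y₁ y₂]
      constructor <;> intro h <;> linarith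
    by_cases hxmem : x ∈ Set.Icc (P - α) (Q + α)
    · rw [Set.indicator_of_mem hxmem]
      have hfx : |x - x₁| + |x - x₂| ≤ (Q - P) + 2 * α := by
        rw [Set.ext_iff] at hxset
        exact (hxset x).mpr hxmem
      have hc : v - u ≤ -γ - (|x - x₁| + |x - x₂|) := by linarith
      rw [hpre, slab_eq u v _ huv hc, Real.volume_Icc]
      congr 1
      ring
    · rw [Set.indicator_of_notMem hxmem]
      have hfx : ¬(|x - x₁| + |x - x₂| ≤ (Q - P) + 2 * α) := by
        rw [Set.ext_iff] at hxset
        exact fun h => hxmem ((hxset x).mp h)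
      push_neg at hfx
      have hempty : Prod.mk x ⁻¹' S = ∅ := by
        rw [hpre]
        ext y
        simp only [Set.mem_setOf_eq, Set.mem_empty_iff_false, iff_false, not_le]
        have h2 : v - u ≤ |y - u| + |y - v| := by
          have := abs_pair_lower y u v
          rcases abs_cases (u - v) with ⟨h3, _⟩ | ⟨h3, _⟩ <;> linarith
        linarith
      rw [hempty, measure_empty]
  rw [lintegral_congr hslice, lintegral_indicator measurableSet_Icc]
  -- convert to a real integral
  have hcont : Continuous fun x : ℝ => -γ - (|x - x₁| + |x - x₂|) := by fun_prop
  have hnn : ∀ x ∈ Set.Icc (P - α) (Q + α), 0 ≤ -γ - (|x - x₁| + |x - x₂|) := by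
    intro x hxmem
    have hfx : |x - x₁| + |x - x₂| ≤ (Q - P) + 2 * α := by
      rw [Set.ext_iff] at hxset
      exact (hxset x).mpr hxmem
    linarith
  rw [← ofReal_integral_eq_lintegral_ofReal (hcont.integrableOn_Icc)
      ((ae_restrict_iff' measurableSet_Icc).mpr (ae_of_all _ hnn))]
  congr 1
  -- compute the real integral
  have hle : P - α ≤ Q + α := by linarith
  rw [MeasureTheory.integral_Icc_eq_integral_Ioc,
    ← intervalIntegral.integral_of_le hle]
  have hi : ∀ d e : ℝ, IntervalIntegrable (fun x => -γ - (|x - x₁| + |x - x₂|)) volume d e :=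
    fun d e => hcont.intervalIntegrable d e
  rw [← intervalIntegral.integral_add_adjacent_intervals (hi (P - α) P) (hi P (Q + α)),
    ← intervalIntegral.integral_add_adjacent_intervals (hi P Q) (hi Q (Q + α))]
  have e1 : ∫ x in (P - α)..P, (-γ - (|x - x₁| + |x - x₂|)) =
      ∫ x in (P - α)..P, ((-γ - P - Q) + 2 * x) := by
    apply intervalIntegral.integral_congr
    intro x hxmem
    rw [Set.uIcc_of_le (by linarith)] at hxmem
    obtain ⟨hx1, hx2⟩ := hxmem
    show -γ - (|x - x₁| + |x - x₂|) = _
    rw [abs_pair_minmax x x₁ x₂, abs_of_nonpos (by linarith : x - P ≤ 0),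
      abs_of_nonpos (by linarith : x - Q ≤ 0)]
    ring
  have e2 : ∫ x in P..Q, (-γ - (|x - x₁| + |x - x₂|)) =
      ∫ x in P..Q, (-γ - (Q - P)) := by
    apply intervalIntegral.integral_congr
    intro x hxmem
    rw [Set.uIcc_of_le hPQ] at hxmem
    obtain ⟨hx1, hx2⟩ := hxmem
    show -γ - (|x - x₁| + |x - x₂|) = _
    rw [abs_pair_minmax x x₁ x₂, abs_of_nonneg (by linarith : 0 ≤ x - P),
      abs_of_nonpos (by linarith : x - Q ≤ 0)]
    ring
  have e3 : ∫ x in Q..(Q + α), (-γ - (|x - x₁| + |x - x₂|)) =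
      ∫ x in Q..(Q + α), ((-γ + P + Q) + (-2) * x) := by
    apply intervalIntegral.integral_congr
    intro x hxmem
    rw [Set.uIcc_of_le (by linarith)] at hxmem
    obtain ⟨hx1, hx2⟩ := hxmem
    show -γ - (|x - x₁| + |x - x₂|) = _
    rw [abs_pair_minmax x x₁ x₂, abs_of_nonneg (by linarith : 0 ≤ x - P),
      abs_of_nonneg (by linarith : 0 ≤ x - Q)]
    ring
  rw [e1, e2, e3, integral_linear, integral_linear, intervalIntegral.integral_const,
    smul_eq_mul, ← ha, ← hb]
  have hγ3 : γ = -((Q - P) + (v - u) + 2 * α) := by linarith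
  rw [hγ3]
  ring
end

section
/- The perimeter (in the taxicab metric) of the boundary of the region {(x,y) : |x+1| + |x-1| + |x| + 3|y| ≤ S} equals (16/3)(S-2) for 2 < S < 3 and equals (8/3)(S-1) for S ≥ 3. -/
/-- Taxicab length of a segment. -/
def tlen (P Q : ℝ × ℝ) : ℝ := |P.1 - Q.1| + |P.2 - Q.2|

lemma comb_mem (V : Set (ℝ × ℝ)) (A B C D : ℝ × ℝ) (hA : A ∈ V) (hB : B ∈ V)
    (hC : C ∈ V) (hD : D ∈ V) {a b c d : ℝ} (ha : 0 ≤ a) (hb : 0 ≤ b) (hc : 0 ≤ c)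
    (hd : 0 ≤ d) (hsum : a + b + c + d = 1) (p : ℝ × ℝ)
    (h1 : p.1 = a * A.1 + b * B.1 + c * C.1 + d * D.1)
    (h2 : p.2 = a * A.2 + b * B.2 + c * C.2 + d * D.2) : p ∈ convexHull ℝ V := by
  have hmem := Finset.centerMass_mem_convexHull (Finset.univ : Finset (Fin 4))
    (w := ![a, b, c, d]) (z := ![A, B, C, D])
    (by intro i _; fin_cases i <;> simpa) (by simp [Fin.sum_univ_four, hsum])
    (by intro i _; fin_cases i <;> simpa)
  convert hmem using 1
  rw [Finset.centerMass]
  simp only [Fin.sum_univ_four, Matrix.cons_val_zero, Matrix.cons_val_one, Matrix.head_cons,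
    Matrix.cons_val_two, Matrix.tail_cons, Matrix.cons_val_three]
  rw [hsum, inv_one, one_smul]
  ext <;> simp [h1, h2]

lemma key (S x y : ℝ) :
    |x + 1| + |x - 1| + |x| + 3 * |y| ≤ S ↔
      |x| + 3 * |y| ≤ S - 2 ∧ |x| + 1 * |y| ≤ S / 3 := by
  rcases abs_cases (x + 1) with ⟨e1, _⟩ | ⟨e1, _⟩ <;>
    rcases abs_cases (x - 1) with ⟨e2, _⟩ | ⟨e2, _⟩ <;>
    rcases abs_cases x with ⟨e3, _⟩ | ⟨e3, _⟩ <;>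
    rcases abs_cases y with ⟨e4, _⟩ | ⟨e4, _⟩ <;>
    constructor <;> intro h <;>
    first
      | exact ⟨by linarith, by linarith⟩
      | (obtain ⟨h1, h2⟩ := h; linarith)

lemma convex_abs2 (c t : ℝ) (hc : 0 ≤ c) :
    Convex ℝ {p : ℝ × ℝ | |p.1| + c * |p.2| ≤ t} := by
  intro p hp q hq a b ha hb hab
  simp only [Set.mem_setOf_eq] at *
  have h1 : |(a • p + b • q).1| ≤ a * |p.1| + b * |q.1| := by
    have := (abs_add_le (a * p.1) (b * q.1)).trans_eq
      (by rw [abs_mul, abs_mul, abs_of_nonneg ha, abs_of_nonneg hb])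
    simpa [smul_eq_mul] using this
  have h2 : |(a • p + b • q).2| ≤ a * |p.2| + b * |q.2| := by
    have := (abs_add_le (a * p.2) (b * q.2)).trans_eq
      (by rw [abs_mul, abs_mul, abs_of_nonneg ha, abs_of_nonneg hb])
    simpa [smul_eq_mul] using this
  calc |(a • p + b • q).1| + c * |(a • p + b • q).2|
      ≤ (a * |p.1| + b * |q.1|) + c * (a * |p.2| + b * |q.2|) := by gcongr
    _ = a * (|p.1| + c * |p.2|) + b * (|q.1| + c * |q.2|) := by ring
    _ ≤ a * t + b * t := add_le_add
        (mul_le_mul_of_nonneg_left hp ha) (mul_le_mul_of_nonneg_left hq hb)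
    _ = t := by rw [← add_mul, hab, one_mul]

lemma abs_pair_le (u v c t : ℝ) (h1 : u + c * v ≤ t) (h2 : -u + c * v ≤ t)
    (h3 : u - c * v ≤ t) (h4 : -u - c * v ≤ t) : |u| + c * |v| ≤ t := by
  rcases abs_cases u with ⟨e, _⟩ | ⟨e, _⟩ <;> rcases abs_cases v with ⟨f, _⟩ | ⟨f, _⟩ <;>
    rw [e, f] <;> linarith

lemma rhom_quad (c x y : ℝ) (hc : 0 < c) (hx : 0 ≤ x) (hy : 0 ≤ y)
    (h : x + 3 * y ≤ c) :
    ∃ a b d : ℝ, 0 ≤ a ∧ 0 ≤ b ∧ 0 ≤ d ∧ a + b + d = 1 ∧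
      a * c - d * c = x ∧ b * (c / 3) = y := by
  obtain ⟨o, ho⟩ : ∃ o : ℝ, o = 1 - x / c - 3 * y / c := ⟨_, rfl⟩
  have hoc : 0 ≤ o := by
    rw [ho]
    have : (x + 3 * y) / c ≤ 1 := (div_le_one hc).2 h
    rw [add_div] at this
    linarith
  have hxo : 0 ≤ x / c := by positivity
  have hyo : 0 ≤ 3 * y / c := by positivity
  refine ⟨x / c + o / 2, 3 * y / c, o / 2, by linarith, by linarith, by linarith,
    by rw [ho]; field_simp; ring, by field_simp; ring, by field_simp⟩

lemma octa_quad (S x y : ℝ) (hS : 3 ≤ S) (hx : 0 ≤ x) (hy : 0 ≤ y)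
    (h1 : x + 3 * y ≤ S - 2) (h2 : x + y ≤ S / 3) :
    ∃ a b c d : ℝ, 0 ≤ a ∧ 0 ≤ b ∧ 0 ≤ c ∧ 0 ≤ d ∧ a + b + c + d = 1 ∧
      a * (S / 3) + b * 1 - d * (S / 3) = x ∧
      b * ((S - 3) / 3) + c * ((S - 2) / 3) = y := by
  have hS0 : (0:ℝ) < S := by linarith
  have hS2 : (0:ℝ) < S - 2 := by linarith
  rcases lt_or_ge (3 * y) ((S - 3) * x) with h | h
  · -- triangle O A B, here S > 3
    have hS3 : (0:ℝ) < S - 3 := by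
      rcases lt_or_ge 3 S with h' | h'
      · linarith
      · exfalso; have : S = 3 := le_antisymm h' hS
        rw [this] at h; nlinarith
    obtain ⟨o, ho⟩ : ∃ o : ℝ, o = 1 - 3 * (x + y) / S := ⟨_, rfl⟩
    have hoc : 0 ≤ o := by
      rw [ho]
      have : 3 * (x + y) / S ≤ 1 := by
        rw [div_le_one hS0]; linarith
      linarith
    have ha0 : 0 ≤ 3 * ((S - 3) * x - 3 * y) / (S * (S - 3)) :=
      div_nonneg (by linarith) (by positivity)
    have hb0 : 0 ≤ 3 * y / (S - 3) := by positivity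
    refine ⟨3 * ((S - 3) * x - 3 * y) / (S * (S - 3)) + o / 2, 3 * y / (S - 3), 0, o / 2,
      by linarith, hb0, le_refl 0, by linarith, ?_, ?_, ?_⟩
    · rw [ho]; field_simp; ring
    · rw [ho]; field_simp; ring
    · field_simp; ring
  · -- triangle O B C
    obtain ⟨cc, hcc⟩ : ∃ cc : ℝ, cc = (3 * y - (S - 3) * x) / (S - 2) := ⟨_, rfl⟩
    have hc0 : 0 ≤ cc := by rw [hcc]; apply div_nonneg; linarith; linarith
    obtain ⟨o, ho⟩ : ∃ o : ℝ, o = 1 - x - cc := ⟨_, rfl⟩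
    have hoc : 0 ≤ o := by
      rw [ho, hcc]
      have : (3 * y - (S - 3) * x) / (S - 2) ≤ 1 - x := by
        rw [div_le_iff₀ hS2]; nlinarith
      linarith
    refine ⟨o / 2, x, cc, o / 2, by linarith, hx, hc0, by linarith,
      by rw [ho]; ring, by ring, ?_⟩
    · rw [hcc]; field_simp; ring


set_option maxHeartbeats 1000000 in
lemma rhom_forward (S : ℝ) (hS2 : 2 < S) (hS3 : S < 3) :
    {p : ℝ × ℝ | |p.1 + 1| + |p.1 - 1| + |p.1| + 3 * |p.2| ≤ S} ⊆
      convexHull ℝ {(S - 2, 0), (0, (S - 2) / 3), (-(S - 2), 0), (0, -(S - 2) / 3)} := by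
  intro p hp
  rw [Set.mem_setOf_eq] at hp
  obtain ⟨h1, h2⟩ := (key S p.1 p.2).1 hp
  obtain ⟨a, b, d, ha, hb, hd, hsum, e1, e2⟩ :=
    rhom_quad (S - 2) |p.1| |p.2| (by linarith) (abs_nonneg _) (abs_nonneg _)
      (by linarith)
  rcases le_total 0 p.1 with hx | hx <;> rcases le_total 0 p.2 with hy | hy
  · rw [abs_of_nonneg hx] at e1; rw [abs_of_nonneg hy] at e2
    exact comb_mem _ (S - 2, 0) (0, (S - 2) / 3) (0, -(S - 2) / 3) (-(S - 2), 0)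
      (by simp) (by simp) (by simp) (by simp) ha hb le_rfl hd (by linarith) p
      (by dsimp only; linarith) (by dsimp only; linarith)
  · rw [abs_of_nonneg hx] at e1; rw [abs_of_nonpos hy] at e2
    exact comb_mem _ (S - 2, 0) (0, -(S - 2) / 3) (0, (S - 2) / 3) (-(S - 2), 0)
      (by simp) (by simp) (by simp) (by simp) ha hb le_rfl hd (by linarith) p
      (by dsimp only; linarith) (by dsimp only; linarith)
  · rw [abs_of_nonpos hx] at e1; rw [abs_of_nonneg hy] at e2
    exact comb_mem _ (-(S - 2), 0) (0, (S - 2) / 3) (0, -(S - 2) / 3) (S - 2, 0)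
      (by simp) (by simp) (by simp) (by simp) ha hb le_rfl hd (by linarith) p
      (by dsimp only; linarith) (by dsimp only; linarith)
  · rw [abs_of_nonpos hx] at e1; rw [abs_of_nonpos hy] at e2
    exact comb_mem _ (-(S - 2), 0) (0, -(S - 2) / 3) (0, (S - 2) / 3) (S - 2, 0)
      (by simp) (by simp) (by simp) (by simp) ha hb le_rfl hd (by linarith) p
      (by dsimp only; linarith) (by dsimp only; linarith)

set_option maxHeartbeats 1000000 in
lemma octa_forward (S : ℝ) (hS : 3 ≤ S) :
    {p : ℝ × ℝ | |p.1 + 1| + |p.1 - 1| + |p.1| + 3 * |p.2| ≤ S} ⊆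
      convexHull ℝ {(S / 3, 0), (1, (S - 3) / 3), (0, (S - 2) / 3), (-1, (S - 3) / 3),
        (-S / 3, 0), (-1, -(S - 3) / 3), (0, -(S - 2) / 3), (1, -(S - 3) / 3)} := by
  intro p hp
  rw [Set.mem_setOf_eq] at hp
  obtain ⟨h1, h2⟩ := (key S p.1 p.2).1 hp
  obtain ⟨a, b, c, d, ha, hb, hc, hd, hsum, e1, e2⟩ :=
    octa_quad S |p.1| |p.2| hS (abs_nonneg _) (abs_nonneg _) (by linarith)
      (by linarith)
  rcases le_total 0 p.1 with hx | hx <;> rcases le_total 0 p.2 with hy | hy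
  · rw [abs_of_nonneg hx] at e1; rw [abs_of_nonneg hy] at e2
    exact comb_mem _ (S / 3, 0) (1, (S - 3) / 3) (0, (S - 2) / 3) (-S / 3, 0)
      (by simp) (by simp) (by simp) (by simp) ha hb hc hd hsum p
      (by dsimp only; linarith) (by dsimp only; linarith)
  · rw [abs_of_nonneg hx] at e1; rw [abs_of_nonpos hy] at e2
    exact comb_mem _ (S / 3, 0) (1, -(S - 3) / 3) (0, -(S - 2) / 3) (-S / 3, 0)
      (by simp) (by simp) (by simp) (by simp) ha hb hc hd hsum p
      (by dsimp only; linarith) (by dsimp only; linarith)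
  · rw [abs_of_nonpos hx] at e1; rw [abs_of_nonneg hy] at e2
    exact comb_mem _ (-S / 3, 0) (-1, (S - 3) / 3) (0, (S - 2) / 3) (S / 3, 0)
      (by simp) (by simp) (by simp) (by simp) ha hb hc hd hsum p
      (by dsimp only; linarith) (by dsimp only; linarith)
  · rw [abs_of_nonpos hx] at e1; rw [abs_of_nonpos hy] at e2
    exact comb_mem _ (-S / 3, 0) (-1, -(S - 3) / 3) (0, -(S - 2) / 3) (S / 3, 0)
      (by simp) (by simp) (by simp) (by simp) ha hb hc hd hsum p
      (by dsimp only; linarith) (by dsimp only; linarith)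

/-- Taxicab perimeter of the trifocal taxicab ellipse (formulas (10)):
for 2 < S < 3 the region is the rhombus with the listed vertices and its taxicab
perimeter is (16/3)(S-2); for S ≥ 3 it is the octagon with the listed vertices and
its taxicab perimeter is (8/3)(S-1). -/
theorem trifocal_taxicab_perimeter (S : ℝ) :
    (2 < S → S < 3 →
      {p : ℝ × ℝ | |p.1 + 1| + |p.1 - 1| + |p.1| + 3 * |p.2| ≤ S} =
        convexHull ℝ {(S - 2, 0), (0, (S - 2) / 3), (-(S - 2), 0), (0, -(S - 2) / 3)} ∧
      tlen (S - 2, 0) (0, (S - 2) / 3) + tlen (0, (S - 2) / 3) (-(S - 2), 0) +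
        tlen (-(S - 2), 0) (0, -(S - 2) / 3) + tlen (0, -(S - 2) / 3) (S - 2, 0) =
        (16 / 3) * (S - 2)) ∧
    (3 ≤ S →
      {p : ℝ × ℝ | |p.1 + 1| + |p.1 - 1| + |p.1| + 3 * |p.2| ≤ S} =
        convexHull ℝ {(S / 3, 0), (1, (S - 3) / 3), (0, (S - 2) / 3), (-1, (S - 3) / 3),
          (-S / 3, 0), (-1, -(S - 3) / 3), (0, -(S - 2) / 3), (1, -(S - 3) / 3)} ∧
      tlen (S / 3, 0) (1, (S - 3) / 3) + tlen (1, (S - 3) / 3) (0, (S - 2) / 3) +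
        tlen (0, (S - 2) / 3) (-1, (S - 3) / 3) + tlen (-1, (S - 3) / 3) (-S / 3, 0) +
        tlen (-S / 3, 0) (-1, -(S - 3) / 3) + tlen (-1, -(S - 3) / 3) (0, -(S - 2) / 3) +
        tlen (0, -(S - 2) / 3) (1, -(S - 3) / 3) + tlen (1, -(S - 3) / 3) (S / 3, 0) =
        (8 / 3) * (S - 1)) := by
  have hregion : {p : ℝ × ℝ | |p.1 + 1| + |p.1 - 1| + |p.1| + 3 * |p.2| ≤ S} =
      {p : ℝ × ℝ | |p.1| + 3 * |p.2| ≤ S - 2} ∩ {p : ℝ × ℝ | |p.1| + 1 * |p.2| ≤ S / 3} :=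
    Set.ext fun p => by
      simpa [Set.mem_setOf_eq, Set.mem_inter_iff] using key S p.1 p.2
  have hconv : Convex ℝ {p : ℝ × ℝ | |p.1 + 1| + |p.1 - 1| + |p.1| + 3 * |p.2| ≤ S} := by
    rw [hregion]
    exact (convex_abs2 3 (S - 2) (by norm_num)).inter (convex_abs2 1 (S / 3) (by norm_num))
  constructor
  · intro hS2 hS3
    constructor
    · apply Set.Subset.antisymm
      · exact rhom_forward S hS2 hS3
      · apply convexHull_min _ hconv
        intro q hq
        simp only [Set.mem_insert_iff, Set.mem_singleton_iff] at hq
        rcases hq with rfl | rfl | rfl | rfl <;>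
          exact Set.mem_setOf_eq ▸ (key _ _ _).2
            ⟨by dsimp only; apply abs_pair_le <;> linarith,
             by dsimp only; apply abs_pair_le <;> linarith⟩
    · have hs : (0:ℝ) ≤ S - 2 := by linarith
      have hs3 : (0:ℝ) ≤ (S - 2) / 3 := by linarith
      simp only [tlen, sub_zero, zero_sub, abs_neg, neg_neg, neg_div]
      rw [abs_of_nonneg hs, abs_of_nonneg hs3]
      ring
  · intro hS
    constructor
    · apply Set.Subset.antisymm
      · exact octa_forward S hS
      · apply convexHull_min _ hconv
        intro q hq
        simp only [Set.mem_insert_iff, Set.mem_singleton_iff] at hq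
        rcases hq with rfl | rfl | rfl | rfl | rfl | rfl | rfl | rfl <;>
          exact Set.mem_setOf_eq ▸ (key _ _ _).2
            ⟨by dsimp only; apply abs_pair_le <;> linarith,
             by dsimp only; apply abs_pair_le <;> linarith⟩
    · simp only [tlen]
      repeat
        first
          | rw [abs_of_nonneg (by linarith)]
          | rw [abs_of_nonpos (by linarith)]
      ring
end

section
/- Let F₁ = (x₁,y₁), F₂ = (x₂,y₂) with y₁ = y₂, and γ ≤ 0 with -γ > δ = |x₁ - x₂|. With 2α = -γ - δ, the hexagonal taxicab ellipse region {(x,y) : |x-x₁|+|y-y₁|+|x-x₂|+|y-y₂| ≤ -γ} has Lebesgue measure 2α·(-γ) - 2α², and its taxicab perimeter is 2(-γ) + 4α. -/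
open MeasureTheory

section TaxicabAux

open Set

private lemma seg_horiz' {u v x c : ℝ} (h1 : u ≤ x) (h2 : x ≤ v) :
    ((x, c) : ℝ × ℝ) ∈ segment ℝ (u, c) (v, c) := by
  have hx : x ∈ segment ℝ u v := by
    rw [segment_eq_Icc (h1.trans h2)]; exact ⟨h1, h2⟩
  obtain ⟨s, t, hs, ht, hst, hx⟩ := hx
  refine ⟨s, t, hs, ht, hst, ?_⟩
  simp only [Prod.smul_def, Prod.mk_add_mk, Prod.mk.injEq, smul_eq_mul] at *
  exact ⟨hx, by linear_combination c * hst⟩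

/-- The closed hexagon region. -/
def hexSet (a b y₁ α : ℝ) : Set (ℝ × ℝ) :=
  {p : ℝ × ℝ | |p.2 - y₁| ≤ α ∧ a - α + |p.2 - y₁| ≤ p.1 ∧ p.1 ≤ b + α - |p.2 - y₁|}

lemma hexSet_convex (a b y₁ α : ℝ) : Convex ℝ (hexSet a b y₁ α) := by
  intro p hp q hq u v hu hv huv
  obtain ⟨h1, h2, h3⟩ := hp
  obtain ⟨k1, k2, k3⟩ := hq
  have hv' : v = 1 - u := by linarith
  subst hv'
  have e : (u • p + (1 - u) • q).2 - y₁ = u * (p.2 - y₁) + (1 - u) * (q.2 - y₁) := by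
    simp only [Prod.smul_def, Prod.snd_add, smul_eq_mul]; ring
  have key : |(u • p + (1 - u) • q).2 - y₁| ≤ u * |p.2 - y₁| + (1 - u) * |q.2 - y₁| := by
    rw [e]
    calc |u * (p.2 - y₁) + (1 - u) * (q.2 - y₁)|
        ≤ |u * (p.2 - y₁)| + |(1 - u) * (q.2 - y₁)| := abs_add_le _ _
      _ = u * |p.2 - y₁| + (1 - u) * |q.2 - y₁| := by
          rw [abs_mul, abs_mul, abs_of_nonneg hu, abs_of_nonneg hv]
  have hfst : (u • p + (1 - u) • q).1 = u * p.1 + (1 - u) * q.1 := by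
    simp [Prod.smul_def]
  refine ⟨?_, ?_, ?_⟩ <;>
    [skip; rw [hfst]; rw [hfst]] <;>
    nlinarith [key, mul_le_mul_of_nonneg_left h1 hu, mul_le_mul_of_nonneg_left k1 hv,
      mul_le_mul_of_nonneg_left h2 hu, mul_le_mul_of_nonneg_left k2 hv,
      mul_le_mul_of_nonneg_left h3 hu, mul_le_mul_of_nonneg_left k3 hv]

lemma hexSet_eq_hull (a b y₁ α : ℝ) (hab : a ≤ b) (hα : 0 < α) :
    hexSet a b y₁ α = convexHull ℝ {(b + α, y₁), (b, y₁ + α), (a, y₁ + α), (a - α, y₁),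
      (a, y₁ - α), (b, y₁ - α)} := by
  set V : Set (ℝ × ℝ) := {(b + α, y₁), (b, y₁ + α), (a, y₁ + α), (a - α, y₁),
      (a, y₁ - α), (b, y₁ - α)} with hV
  have hconv := convex_convexHull ℝ V
  have m1 : ((b + α, y₁) : ℝ × ℝ) ∈ convexHull ℝ V := subset_convexHull ℝ V (by simp [hV])
  have m2 : ((b, y₁ + α) : ℝ × ℝ) ∈ convexHull ℝ V := subset_convexHull ℝ V (by simp [hV])
  have m3 : ((a, y₁ + α) : ℝ × ℝ) ∈ convexHull ℝ V := subset_convexHull ℝ V (by simp [hV])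
  have m4 : ((a - α, y₁) : ℝ × ℝ) ∈ convexHull ℝ V := subset_convexHull ℝ V (by simp [hV])
  have m5 : ((a, y₁ - α) : ℝ × ℝ) ∈ convexHull ℝ V := subset_convexHull ℝ V (by simp [hV])
  have m6 : ((b, y₁ - α) : ℝ × ℝ) ∈ convexHull ℝ V := subset_convexHull ℝ V (by simp [hV])
  apply Set.Subset.antisymm
  · intro p hp
    obtain ⟨h1, h2, h3⟩ := hp
    rcases le_total y₁ p.2 with hc | hc
    · have ht : |p.2 - y₁| = p.2 - y₁ := abs_of_nonneg (by linarith)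
      rw [ht] at h1 h2 h3
      set s := p.2 - y₁ with hs
      have hs0 : 0 ≤ s := by linarith
      have c1 : 0 ≤ 1 - s / α := by
        rw [sub_nonneg, div_le_one hα]; exact h1
      have c2 : 0 ≤ s / α := div_nonneg hs0 hα.le
      have hL : ((a - α + s, p.2) : ℝ × ℝ) ∈ segment ℝ (a - α, y₁) (a, y₁ + α) := by
        refine ⟨1 - s / α, s / α, c1, c2, by ring, ?_⟩
        simp only [Prod.smul_def, Prod.mk_add_mk, smul_eq_mul, Prod.mk.injEq]
        constructor <;> field_simp <;> ring
      have hR : ((b + α - s, p.2) : ℝ × ℝ) ∈ segment ℝ (b + α, y₁) (b, y₁ + α) := by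
        refine ⟨1 - s / α, s / α, c1, c2, by ring, ?_⟩
        simp only [Prod.smul_def, Prod.mk_add_mk, smul_eq_mul, Prod.mk.injEq]
        constructor <;> field_simp <;> ring
      have hLh : ((a - α + s, p.2) : ℝ × ℝ) ∈ convexHull ℝ V :=
        hconv.segment_subset m4 m3 hL
      have hRh : ((b + α - s, p.2) : ℝ × ℝ) ∈ convexHull ℝ V :=
        hconv.segment_subset m1 m2 hR
      have hseg : ((p.1, p.2) : ℝ × ℝ) ∈ segment ℝ (a - α + s, p.2) (b + α - s, p.2) :=
        seg_horiz' h2 h3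
      rw [Prod.mk.eta] at hseg
      exact hconv.segment_subset hLh hRh hseg
    · have ht : |p.2 - y₁| = y₁ - p.2 := by
        rw [abs_sub_comm]; exact abs_of_nonneg (by linarith)
      rw [ht] at h1 h2 h3
      set s := y₁ - p.2 with hs
      have hs0 : 0 ≤ s := by linarith
      have c1 : 0 ≤ 1 - s / α := by
        rw [sub_nonneg, div_le_one hα]; exact h1
      have c2 : 0 ≤ s / α := div_nonneg hs0 hα.le
      have hL : ((a - α + s, p.2) : ℝ × ℝ) ∈ segment ℝ (a - α, y₁) (a, y₁ - α) := by
        refine ⟨1 - s / α, s / α, c1, c2, by ring, ?_⟩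
        simp only [Prod.smul_def, Prod.mk_add_mk, smul_eq_mul, Prod.mk.injEq]
        constructor <;> field_simp <;> ring
      have hR : ((b + α - s, p.2) : ℝ × ℝ) ∈ segment ℝ (b + α, y₁) (b, y₁ - α) := by
        refine ⟨1 - s / α, s / α, c1, c2, by ring, ?_⟩
        simp only [Prod.smul_def, Prod.mk_add_mk, smul_eq_mul, Prod.mk.injEq]
        constructor <;> field_simp <;> ring
      have hLh : ((a - α + s, p.2) : ℝ × ℝ) ∈ convexHull ℝ V :=
        hconv.segment_subset m4 m5 hL
      have hRh : ((b + α - s, p.2) : ℝ × ℝ) ∈ convexHull ℝ V :=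
        hconv.segment_subset m1 m6 hR
      have hseg : ((p.1, p.2) : ℝ × ℝ) ∈ segment ℝ (a - α + s, p.2) (b + α - s, p.2) :=
        seg_horiz' h2 h3
      rw [Prod.mk.eta] at hseg
      exact hconv.segment_subset hLh hRh hseg
  · apply convexHull_min _ (hexSet_convex a b y₁ α)
    intro x hx
    simp only [hV, Set.mem_insert_iff, Set.mem_singleton_iff] at hx
    rcases hx with rfl | rfl | rfl | rfl | rfl | rfl <;>
      refine ⟨?_, ?_, ?_⟩ <;>
      simp only [sub_self, abs_zero, add_zero, sub_zero, add_sub_cancel_left,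
        show y₁ + α - y₁ = α from by ring, show y₁ - α - y₁ = -α from by ring,
        abs_neg, abs_of_nonneg hα.le] <;>
      linarith

private lemma lin_int' (C D u v : ℝ) :
    ∫ y in u..v, (C + D * y) = C * (v - u) + D * ((v ^ 2 - u ^ 2) / 2) := by
  rw [intervalIntegral.integral_add (intervalIntegrable_const)
    ((intervalIntegral.intervalIntegrable_id).const_mul D),
    intervalIntegral.integral_const, intervalIntegral.integral_const_mul, integral_id]
  simp [smul_eq_mul]; ring

lemma hexSet_volume (a b y₁ α : ℝ) (hab : a ≤ b) (hα : 0 < α) :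
    volume (hexSet a b y₁ α) = ENNReal.ofReal (2 * α * (b - a) + 2 * α ^ 2) := by
  have hcont : Continuous (fun y : ℝ => (b - a) + 2 * α - 2 * |y - y₁|) := by
    apply continuous_const.sub
    exact continuous_const.mul (continuous_id.sub continuous_const).abs
  have habs : Continuous (fun p : ℝ × ℝ => |p.2 - y₁|) :=
    (continuous_snd.sub continuous_const).abs
  have hm : MeasurableSet (hexSet a b y₁ α) := by
    simp only [hexSet, setOf_and]
    exact ((isClosed_le habs continuous_const).inter
      (((isClosed_le (continuous_const.add habs) continuous_fst)).inter
        (isClosed_le continuous_fst (continuous_const.sub habs)))).measurableSet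
  rw [Measure.volume_eq_prod, Measure.prod_apply_symm hm]
  have hslice : ∀ y : ℝ, volume ((fun x => (x, y)) ⁻¹' hexSet a b y₁ α) =
      (Icc (y₁ - α) (y₁ + α)).indicator
        (fun y => ENNReal.ofReal ((b - a) + 2 * α - 2 * |y - y₁|)) y := by
    intro y
    by_cases h : |y - y₁| ≤ α
    · have hpre : ((fun x => (x, y)) ⁻¹' hexSet a b y₁ α) =
          Icc (a - α + |y - y₁|) (b + α - |y - y₁|) := by
        ext x; simp [hexSet, h, mem_Icc]
      rw [hpre, Real.volume_Icc, indicator_of_mem]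
      · congr 1; ring
      · rw [mem_Icc]
        obtain ⟨h1, h2⟩ := abs_le.1 h
        constructor <;> linarith
    · have hpre : ((fun x => (x, y)) ⁻¹' hexSet a b y₁ α) = ∅ := by
        ext x; simp [hexSet, h]
      rw [hpre, measure_empty, indicator_of_notMem]
      intro hy
      rw [mem_Icc] at hy
      exact h (abs_le.2 ⟨by linarith [hy.1], by linarith [hy.2]⟩)
  rw [lintegral_congr hslice, lintegral_indicator measurableSet_Icc]
  rw [← ofReal_integral_eq_lintegral_ofReal (hcont.integrableOn_Icc)
    ((ae_restrict_iff' measurableSet_Icc).2 (ae_of_all _ fun y hy => by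
      rw [mem_Icc] at hy
      have : |y - y₁| ≤ α := abs_le.2 ⟨by linarith [hy.1], by linarith [hy.2]⟩
      simp only [Pi.zero_apply]; linarith))]
  congr 1
  rw [integral_Icc_eq_integral_Ioc,
    ← intervalIntegral.integral_of_le (by linarith : y₁ - α ≤ y₁ + α)]
  have hi : ∀ u v : ℝ,
      IntervalIntegrable (fun y : ℝ => (b - a) + 2 * α - 2 * |y - y₁|) volume u v :=
    fun u v => hcont.intervalIntegrable u v
  rw [← intervalIntegral.integral_add_adjacent_intervals (hi (y₁ - α) y₁) (hi y₁ (y₁ + α))]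
  have e1 : ∫ y in (y₁ - α)..y₁, ((b - a) + 2 * α - 2 * |y - y₁|) =
      ∫ y in (y₁ - α)..y₁, (((b - a) + 2 * α - 2 * y₁) + 2 * y) := by
    apply intervalIntegral.integral_congr
    intro y hy
    rw [uIcc_of_le (by linarith), mem_Icc] at hy
    dsimp only
    rw [abs_sub_comm, abs_of_nonneg (by linarith [hy.2])]
    ring
  have e2 : ∫ y in y₁..(y₁ + α), ((b - a) + 2 * α - 2 * |y - y₁|) =
      ∫ y in y₁..(y₁ + α), (((b - a) + 2 * α + 2 * y₁) + (-2) * y) := by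
    apply intervalIntegral.integral_congr
    intro y hy
    rw [uIcc_of_le (by linarith), mem_Icc] at hy
    dsimp only
    rw [abs_of_nonneg (by linarith [hy.1])]
    ring
  rw [e1, e2, lin_int', lin_int']
  ring

end TaxicabAux

/-- Area and taxicab perimeter of the hexagonal taxicab ellipse (E.1):
foci on a common horizontal line, -γ > δ. The region is the hexagon with the
listed vertices, its area is 2α(-γ) - 2α² and its taxicab perimeter is 2(-γ) + 4α. -/
theorem taxicab_ellipse_hexagon_area_perimeter (x₁ y₁ x₂ y₂ γ : ℝ)
    (hy : y₁ = y₂) (hγ : γ ≤ 0) (hδ : -γ > |x₁ - x₂|) :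
    let α : ℝ := (-γ - |x₁ - x₂|) / 2
    let a : ℝ := min x₁ x₂
    let b : ℝ := max x₁ x₂
    {p : ℝ × ℝ | |p.1 - x₁| + |p.2 - y₁| + |p.1 - x₂| + |p.2 - y₂| ≤ -γ} =
      convexHull ℝ {(b + α, y₁), (b, y₁ + α), (a, y₁ + α), (a - α, y₁),
                    (a, y₁ - α), (b, y₁ - α)} ∧
    volume {p : ℝ × ℝ | |p.1 - x₁| + |p.2 - y₁| + |p.1 - x₂| + |p.2 - y₂| ≤ -γ} =
      ENNReal.ofReal (2 * α * (-γ) - 2 * α ^ 2) ∧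
    tlen (b + α, y₁) (b, y₁ + α) + tlen (b, y₁ + α) (a, y₁ + α) +
      tlen (a, y₁ + α) (a - α, y₁) + tlen (a - α, y₁) (a, y₁ - α) +
      tlen (a, y₁ - α) (b, y₁ - α) + tlen (b, y₁ - α) (b + α, y₁) =
      2 * (-γ) + 4 * α := by
  subst hy
  intro α a b
  have hab : a ≤ b := min_le_max
  have hba : b - a = |x₁ - x₂| := by
    rw [show b - a = max x₁ x₂ - min x₁ x₂ from rfl, max_sub_min_eq_abs, abs_sub_comm]
  have hαd : α = (-γ - (b - a)) / 2 := by rw [hba]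
  have hα : 0 < α := by rw [hαd]; rw [hba]; linarith
  have key : -γ = (b - a) + 2 * α := by rw [hαd]; ring
  have hset : {p : ℝ × ℝ | |p.1 - x₁| + |p.2 - y₁| + |p.1 - x₂| + |p.2 - y₁| ≤ -γ} =
      hexSet a b y₁ α := by
    ext p
    simp only [Set.mem_setOf_eq, hexSet]
    have h1 : |p.1 - x₁| + |p.1 - x₂| = |p.1 - a| + |p.1 - b| := by
      rcases le_total x₁ x₂ with h | h
      · rw [show a = x₁ from min_eq_left h, show b = x₂ from max_eq_right h]
      · rw [show a = x₂ from min_eq_right h, show b = x₁ from max_eq_left h, add_comm]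
    constructor
    · intro hp
      refine ⟨?_, ?_, ?_⟩ <;>
        linarith [hp, h1, key, neg_abs_le (p.1 - a), neg_abs_le (p.1 - b),
          le_abs_self (p.1 - a), le_abs_self (p.1 - b), abs_nonneg (p.2 - y₁)]
    · rintro ⟨k1, k2, k3⟩
      rcases abs_cases (p.1 - a) with ⟨e1, _⟩ | ⟨e1, _⟩ <;>
        rcases abs_cases (p.1 - b) with ⟨e2, _⟩ | ⟨e2, _⟩ <;>
        linarith [h1, key]
  refine ⟨?_, ?_, ?_⟩
  · rw [hset]
    exact hexSet_eq_hull a b y₁ α hab hα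
  · rw [hset, hexSet_volume a b y₁ α hab hα]
    congr 1
    rw [key]; ring
  · simp only [tlen]
    rw [show b + α - b = α from by ring, show y₁ - (y₁ + α) = -α from by ring,
      show y₁ + α - (y₁ + α) = 0 from by ring, show a - (a - α) = α from by ring,
      show y₁ + α - y₁ = α from by ring, show a - α - a = -α from by ring,
      show y₁ - (y₁ - α) = α from by ring, show y₁ - α - (y₁ - α) = 0 from by ring,
      show b - (b + α) = -α from by ring, show y₁ - α - y₁ = -α from by ring,
      abs_neg, abs_zero, abs_of_nonneg hα.le, abs_sub_comm a b,
      abs_of_nonneg (sub_nonneg.2 hab)]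
    linarith [key]
end
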